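/- Let f be an excursion and let s,t ∈ [0,1] with s ≤ t. Then d_L[f](s,t) = ∑_{r∈[0,1]} δ_r(x_r^s(f), x_r^t(f)) and d_T[f](s,t) = f(s) + f(t) − 2·inf_{[s,t]} f − ∑_{r∈[0,1]} |x_r^s(f) − x_r^t(f)|, where both sums have at most countably many nonzero terms. -/

import Mathlib

open Set Filter Topology
open scoped Classical

noncomputable section

/-- Left limit of `f` at `t`, with the convention `f(0−) = 0`. -/
def lm (f : ℝ → ℝ) (t : ℝ) : ℝ := if t = 0 then 0 else Function.leftLim f t

/-- The jump `Δ_t(f) = f t − f(t−)`. -/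
def jump (f : ℝ → ℝ) (t : ℝ) : ℝ := f t - lm f t

/-- `inf_{[s,t]} f`. -/
def infIcc (f : ℝ → ℝ) (s t : ℝ) : ℝ := sInf (f '' Icc s t)

/-- An excursion: a càdlàg function on `[0,1]`, nonnegative, vanishing at `1` (and
extended by `0` outside `[0,1]`), all of whose jumps are nonnegative. -/
structure IsExcursion (f : ℝ → ℝ) : Prop where
  nonneg : ∀ t ∈ Icc (0:ℝ) 1, 0 ≤ f t
  zero_outside : ∀ t, t ∉ Icc (0:ℝ) 1 → f t = 0
  rightCont : ∀ t ∈ Ico (0:ℝ) 1, Tendsto f (𝓝[>] t) (𝓝 (f t))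
  leftLimEx : ∀ t ∈ Ioc (0:ℝ) 1, Tendsto f (𝓝[<] t) (𝓝 (Function.leftLim f t))
  one : f 1 = 0
  jump_nonneg : ∀ t ∈ Icc (0:ℝ) 1, 0 ≤ jump f t

/-- The genealogical relation `s ⪯_f t` : `s ≤ t` and `f(s−) ≤ inf_{[s,t]} f`. -/
def pre (f : ℝ → ℝ) (s t : ℝ) : Prop := s ≤ t ∧ lm f s ≤ infIcc f s t

/-- `x_s^t(f) = 1_{s ≤ t} · max(inf_{[s,t]} f − f(s−), 0)`. -/
def xst (f : ℝ → ℝ) (s t : ℝ) : ℝ := if s ≤ t then max (infIcc f s t - lm f s) 0 else 0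

/-- The most recent common ancestor `s ∧_f t`. -/
def mrca (f : ℝ → ℝ) (s t : ℝ) : ℝ := sSup {r : ℝ | 0 ≤ r ∧ pre f r s ∧ pre f r t}

/-- `δ_t(a,b) = min(|a−b|, Δ_t(f) − |a−b|)`, the circle pseudo-distance on `[0, Δ_t(f)]`. -/
def cdel (f : ℝ → ℝ) (t a b : ℝ) : ℝ := min |a - b| (jump f t - |a - b|)

/-- `d_O(s,t) = ∑_{s ≺_f r ⪯_f t} δ_r(0, x_r^t)`. -/
def dO (f : ℝ → ℝ) (s t : ℝ) : ℝ :=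
  ∑' r : ℝ, if pre f s r ∧ s < r ∧ pre f r t then cdel f r 0 (xst f r t) else 0

/-- `d_T(s,t) = f t − inf_{[s,t]} f − ∑_{s ≺_f r ⪯_f t} x_r^t`, intended for `s ⪯_f t`. -/
def dTanc (f : ℝ → ℝ) (s t : ℝ) : ℝ :=
  f t - infIcc f s t - ∑' r : ℝ, if pre f s r ∧ s < r ∧ pre f r t then xst f r t else 0

/-- The looptree pseudo-distance `d_L[f]`. -/
def dL (f : ℝ → ℝ) (s t : ℝ) : ℝ :=
  cdel f (mrca f s t) (xst f (mrca f s t) s) (xst f (mrca f s t) t)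
    + dO f (mrca f s t) s + dO f (mrca f s t) t

/-- The tree pseudo-distance `d_T[f]`. -/
def dT (f : ℝ → ℝ) (s t : ℝ) : ℝ := dTanc f (mrca f s t) s + dTanc f (mrca f s t) t

/-- The vernation pseudo-distance `d_V[f] = d_T[f] + 2·d_L[f]`. -/
def dV (f : ℝ → ℝ) (s t : ℝ) : ℝ := dT f s t + 2 * dL f s t

/-- `Jf(t) = ∑_{r ⪯_f t} x_r^t(f)`. -/
def Jop (f : ℝ → ℝ) (t : ℝ) : ℝ := ∑' r : ℝ, if pre f r t then xst f r t else 0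

/-- `J^ε f(t) = ∑_{r ⪯_f t, Δ_r(f) ≥ ε} x_r^t(f)`. -/
def Jeps (f : ℝ → ℝ) (ε : ℝ) (t : ℝ) : ℝ :=
  ∑' r : ℝ, if pre f r t ∧ ε ≤ jump f r then xst f r t else 0

/-- Pure jump growth (PJG) excursion: `f(t) = ∑_{r ⪯_f t} x_r^t(f)` on `[0,1]`. -/
def IsPJG (f : ℝ → ℝ) : Prop := ∀ t ∈ Icc (0:ℝ) 1, f t = Jop f t

/-- An increasing bijection from `[0,1]` onto itself. -/
def IncBij (l : ℝ → ℝ) : Prop :=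
  StrictMonoOn l (Icc (0:ℝ) 1) ∧ Set.BijOn l (Icc (0:ℝ) 1) (Icc (0:ℝ) 1)

/-- The Skorokhod distance `ρ` on functions `[0,1] → ℝ`. -/
def skor (f g : ℝ → ℝ) : ℝ :=
  sInf {c : ℝ | 0 ≤ c ∧ ∃ l : ℝ → ℝ, IncBij l ∧
    ∀ x ∈ Icc (0:ℝ) 1, |l x - x| ≤ c ∧ |f x - g (l x)| ≤ c}

/-! ### Auxiliary lemmas -/

namespace Statement3Aux

variable {f : ℝ → ℝ} {s t : ℝ}

lemma f_nonneg (hf : IsExcursion f) (u : ℝ) : 0 ≤ f u := by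
  by_cases hu : u ∈ Icc (0:ℝ) 1
  · exact hf.nonneg u hu
  · rw [hf.zero_outside u hu]

lemma bddBelow_img (hf : IsExcursion f) (a b : ℝ) : BddBelow (f '' Icc a b) := by
  refine ⟨0, ?_⟩
  rintro y ⟨u, -, rfl⟩
  exact f_nonneg hf u

lemma infIcc_le (hf : IsExcursion f) {a b u : ℝ} (hu : u ∈ Icc a b) : infIcc f a b ≤ f u :=
  csInf_le (bddBelow_img hf a b) (mem_image_of_mem f hu)

lemma le_infIcc {a b c : ℝ} (hab : a ≤ b) (h : ∀ u ∈ Icc a b, c ≤ f u) : c ≤ infIcc f a b := by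
  refine le_csInf ((nonempty_Icc.2 hab).image f) ?_
  rintro y ⟨u, hu, rfl⟩
  exact h u hu

lemma infIcc_nonneg (hf : IsExcursion f) {a b : ℝ} (hab : a ≤ b) : 0 ≤ infIcc f a b :=
  le_infIcc hab fun u _ => f_nonneg hf u

lemma infIcc_anti (hf : IsExcursion f) {a a' b : ℝ} (h1 : a ≤ a') (h2 : a' ≤ b) :
    infIcc f a b ≤ infIcc f a' b :=
  le_infIcc h2 fun u hu => infIcc_le hf ⟨h1.trans hu.1, hu.2⟩

lemma infIcc_anti' (hf : IsExcursion f) {a b b' : ℝ} (h1 : a ≤ b') (h2 : b' ≤ b) :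
    infIcc f a b ≤ infIcc f a b' :=
  le_infIcc h1 fun u hu => infIcc_le hf ⟨hu.1, hu.2.trans h2⟩

lemma infIcc_split (hf : IsExcursion f) {a b c : ℝ} (hab : a ≤ b) (hbc : b ≤ c) :
    infIcc f a c = min (infIcc f a b) (infIcc f b c) := by
  refine le_antisymm (le_min (infIcc_anti' hf hab hbc) (infIcc_anti hf hab hbc))
    (le_infIcc (hab.trans hbc) fun u hu => ?_)
  rcases le_total u b with h | h
  · exact (min_le_left _ _).trans (infIcc_le hf ⟨hu.1, h⟩)
  · exact (min_le_right _ _).trans (infIcc_le hf ⟨h, hu.2⟩)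

lemma lm_zero : lm f 0 = 0 := if_pos rfl

lemma tendsto_lm (hf : IsExcursion f) {u : ℝ} (hu : u ∈ Ioc (0:ℝ) 1) :
    Tendsto f (𝓝[<] u) (𝓝 (lm f u)) := by
  rw [lm, if_neg (ne_of_gt hu.1)]
  exact hf.leftLimEx u hu

lemma lm_nonneg (hf : IsExcursion f) {u : ℝ} (hu : u ∈ Icc (0:ℝ) 1) : 0 ≤ lm f u := by
  rcases eq_or_lt_of_le hu.1 with h | h
  · rw [← h, lm_zero]
  · exact ge_of_tendsto' (tendsto_lm hf ⟨h, hu.2⟩) fun v => f_nonneg hf v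

lemma lm_ge (hf : IsExcursion f) {u a c : ℝ} (hu : u ∈ Ioc (0:ℝ) 1) (hau : a < u)
    (h : ∀ v ∈ Ioo a u, c ≤ f v) : c ≤ lm f u :=
  ge_of_tendsto (tendsto_lm hf hu)
    (Filter.mem_of_superset (Ioo_mem_nhdsLT_of_mem ⟨hau, le_refl u⟩) h)

lemma xst_nonneg (f : ℝ → ℝ) (r u : ℝ) : 0 ≤ xst f r u := by
  unfold xst; split
  · exact le_max_right _ _
  · exact le_refl 0

lemma xst_of_pre {r u : ℝ} (h : pre f r u) : xst f r u = infIcc f r u - lm f r := by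
  rw [xst, if_pos h.1, max_eq_left (sub_nonneg.2 h.2)]

lemma xst_zero_of_not_pre {r u : ℝ} (h : ¬ pre f r u) : xst f r u = 0 := by
  unfold xst; split
  · rename_i h2
    have hlt : infIcc f r u - lm f r < 0 :=
      sub_neg.2 (lt_of_not_ge fun hc => h ⟨h2, hc⟩)
    exact max_eq_right hlt.le
  · rfl

lemma xst_le_jump (hf : IsExcursion f) {r : ℝ} (hr : r ∈ Icc (0:ℝ) 1) (u : ℝ) :
    xst f r u ≤ jump f r := by
  unfold xst; split
  · rename_i h
    refine max_le ?_ (hf.jump_nonneg r hr)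
    exact sub_le_sub_right (infIcc_le hf ⟨le_refl r, h⟩) _
  · exact hf.jump_nonneg r hr

lemma cdel_self {r : ℝ} (h : 0 ≤ jump f r) (a : ℝ) : cdel f r a a = 0 := by
  simp [cdel, sub_self, abs_zero, min_eq_left h]

lemma cdel_nonneg {r a b : ℝ} (ha : 0 ≤ a) (hb : 0 ≤ b) (haj : a ≤ jump f r)
    (hbj : b ≤ jump f r) : 0 ≤ cdel f r a b := by
  refine le_min (abs_nonneg _) (sub_nonneg.2 (abs_sub_le_iff.2 ⟨?_, ?_⟩)) <;> linarith

lemma cdel_le_abs {r a b : ℝ} : cdel f r a b ≤ |a - b| := min_le_left _ _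

lemma cdel_zero_comm {r a : ℝ} : cdel f r 0 a = cdel f r a 0 := by
  simp [cdel, abs_sub_comm]

section Mrca

variable (hf : IsExcursion f) (hs : s ∈ Icc (0:ℝ) 1) (ht : t ∈ Icc (0:ℝ) 1) (hst : s ≤ t)

include hf hs ht hst

lemma zero_mem_M : (0:ℝ) ∈ {r : ℝ | 0 ≤ r ∧ pre f r s ∧ pre f r t} := by
  refine ⟨le_refl 0, ⟨hs.1, ?_⟩, ⟨ht.1, ?_⟩⟩
  · rw [lm_zero]; exact infIcc_nonneg hf hs.1
  · rw [lm_zero]; exact infIcc_nonneg hf ht.1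

lemma bddAbove_M : BddAbove {r : ℝ | 0 ≤ r ∧ pre f r s ∧ pre f r t} :=
  ⟨s, fun _ hr => hr.2.1.1⟩

lemma mrca_nonneg : 0 ≤ mrca f s t :=
  le_csSup (bddAbove_M hf hs ht hst) (zero_mem_M hf hs ht hst)

lemma mrca_le_left : mrca f s t ≤ s :=
  csSup_le ⟨0, zero_mem_M hf hs ht hst⟩ fun _ hr => hr.2.1.1

lemma le_mrca {r : ℝ} (h0 : 0 ≤ r) (h1 : pre f r s) (h2 : pre f r t) : r ≤ mrca f s t :=
  le_csSup (bddAbove_M hf hs ht hst) ⟨h0, h1, h2⟩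

lemma mrca_key : ∀ u ∈ Icc (mrca f s t) t, lm f (mrca f s t) ≤ f u := by
  set M := {r : ℝ | 0 ≤ r ∧ pre f r s ∧ pre f r t} with hM
  set m := mrca f s t with hm
  have hm0 : 0 ≤ m := mrca_nonneg hf hs ht hst
  have hms : m ≤ s := mrca_le_left hf hs ht hst
  by_cases hmem : m ∈ M
  · intro u hu
    exact hmem.2.2.2.trans (infIcc_le hf hu)
  · intro u hu
    by_contra hlt
    push_neg at hlt
    have hm_pos : 0 < m := by
      rcases eq_or_lt_of_le hm0 with h | h
      · exact absurd (h ▸ zero_mem_M hf hs ht hst) hmem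
      · exact h
    have htd := tendsto_lm hf ⟨hm_pos, hms.trans hs.2⟩
    set c : ℝ := (f u + lm f m) / 2 with hc
    have hc1 : f u < c := by rw [hc]; linarith
    have hc2 : c < lm f m := by rw [hc]; linarith
    have hev : ∀ᶠ v in 𝓝[<] m, c < f v := htd.eventually_const_lt hc2
    obtain ⟨l, hl, hIoo⟩ := mem_nhdsLT_iff_exists_Ioo_subset.1 hev
    have hmax : max l (m / 2) < m := max_lt hl (by linarith)
    obtain ⟨r, hrM, hr_gt⟩ := exists_lt_of_lt_csSup ⟨0, zero_mem_M hf hs ht hst⟩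
      (show max l (m / 2) < sSup M from hmax)
    have hrm : r < m := lt_of_le_of_ne (le_csSup (bddAbove_M hf hs ht hst) hrM)
      (fun h => hmem (h ▸ hrM))
    have hr0 : 0 < r := lt_of_lt_of_le (by linarith : (0:ℝ) < m / 2)
      ((le_max_right l (m / 2)).trans hr_gt.le)
    have hr1 : r ≤ 1 := hrM.2.1.1.trans hs.2
    have hlr : l < r := (le_max_left l (m / 2)).trans_lt hr_gt
    have h1 : c ≤ lm f r := by
      refine lm_ge hf ⟨hr0, hr1⟩ hlr fun v hv => ?_
      exact (hIoo ⟨hv.1, hv.2.trans hrm⟩).le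
    have h2 : lm f r ≤ f u :=
      hrM.2.2.2.trans (infIcc_le hf ⟨hrm.le.trans hu.1, hu.2⟩)
    linarith

lemma pre_mrca_right : pre f (mrca f s t) t :=
  ⟨(mrca_le_left hf hs ht hst).trans hst,
    le_infIcc ((mrca_le_left hf hs ht hst).trans hst) (mrca_key hf hs ht hst)⟩

lemma pre_mrca_left : pre f (mrca f s t) s :=
  ⟨mrca_le_left hf hs ht hst,
    le_infIcc (mrca_le_left hf hs ht hst)
      fun u hu => mrca_key hf hs ht hst u ⟨hu.1, hu.2.trans hst⟩⟩

lemma infC : infIcc f s t ≤ infIcc f (mrca f s t) s := by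
  set m := mrca f s t with hmdef
  set c := infIcc f s t with hcdef
  have hm0 : 0 ≤ m := mrca_nonneg hf hs ht hst
  have hms : m ≤ s := mrca_le_left hf hs ht hst
  by_contra hlt
  push_neg at hlt
  obtain ⟨y, ⟨u, huIcc, rfl⟩, hyc⟩ :=
    exists_lt_of_csInf_lt ((nonempty_Icc.2 hms).image f) hlt
  set A := {v : ℝ | v ∈ Icc u s ∧ f v < c} with hA
  have huA : u ∈ A := ⟨⟨le_refl u, huIcc.2⟩, hyc⟩
  have hAb : BddAbove A := ⟨s, fun v hv => hv.1.2⟩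
  set w := sSup A with hw
  have huw : u ≤ w := le_csSup hAb huA
  have hws : w ≤ s := csSup_le ⟨u, huA⟩ fun v hv => hv.1.2
  have hcfs : c ≤ f s := infIcc_le hf ⟨le_refl s, hst⟩
  have hwA : w ∉ A := by
    intro hwA
    have hw_lt_s : w < s := by
      rcases eq_or_lt_of_le hws with h | h
      · exact absurd (h ▸ hwA.2) (not_lt.2 hcfs)
      · exact h
    have hrc := hf.rightCont w ⟨(hm0.trans huIcc.1).trans huw, hw_lt_s.trans_le hs.2⟩
    have hev : ∀ᶠ v in 𝓝[>] w, f v < c := hrc.eventually_lt_const hwA.2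
    have hev2 : Ioo w s ∈ 𝓝[>] w := Ioo_mem_nhdsGT_of_mem ⟨le_refl w, hw_lt_s⟩
    obtain ⟨v, hv1, hv2⟩ := (hev.and (eventually_of_mem hev2 fun v hv => hv)).exists
    have : v ∈ A := ⟨⟨huw.trans hv2.1.le, hv2.2.le⟩, hv1⟩
    exact absurd (le_csSup hAb this) (not_le.2 hv2.1)
  have hw_pos : 0 < w := by
    rcases eq_or_lt_of_le ((hm0.trans huIcc.1).trans huw) with h | h
    · exfalso
      have hwu : w ≤ u := by rw [← h]; exact hm0.trans huIcc.1
      have hu0 : u = w := le_antisymm huw hwu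
      exact hwA (hu0 ▸ huA)
    · exact h
  have hw1 : w ≤ 1 := hws.trans hs.2
  have hlm : lm f w ≤ c := by
    by_contra hlc
    push_neg at hlc
    have hev : ∀ᶠ v in 𝓝[<] w, c < f v := (tendsto_lm hf ⟨hw_pos, hw1⟩).eventually_const_lt hlc
    obtain ⟨l, hl, hIoo⟩ := mem_nhdsLT_iff_exists_Ioo_subset.1 hev
    obtain ⟨a, haA, hla⟩ := exists_lt_of_lt_csSup ⟨u, huA⟩ (show l < sSup A from hl)
    have haw : a < w := lt_of_le_of_ne (le_csSup hAb haA) fun h => hwA (h ▸ haA)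
    exact absurd haA.2 (not_lt.2 (hIoo ⟨hla, haw⟩).le)
  have hge : ∀ v ∈ Icc w s, c ≤ f v := by
    intro v hv
    by_contra hvc
    push_neg at hvc
    have hvA : v ∈ A := ⟨⟨huw.trans hv.1, hv.2⟩, hvc⟩
    rcases eq_or_lt_of_le hv.1 with h | h
    · exact hwA (show w ∈ A by rw [h]; exact hvA)
    · exact absurd (le_csSup hAb hvA) (not_le.2 h)
  have hpre_s : pre f w s :=
    ⟨hws, le_infIcc hws fun v hv => hlm.trans (hge v hv)⟩
  have hpre_t : pre f w t := by
    refine ⟨hws.trans hst, le_infIcc (hws.trans hst) fun v hv => hlm.trans ?_⟩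
    rcases le_total v s with h | h
    · exact hge v ⟨hv.1, h⟩
    · exact infIcc_le hf ⟨h, hv.2⟩
  have hwm : w ≤ m := le_mrca hf hs ht hst ((hm0.trans huIcc.1).trans huw) hpre_s hpre_t
  have : u = w := le_antisymm huw (hwm.trans huIcc.1)
  exact hwA (this ▸ huA)


lemma mrca_disj {r : ℝ} (hmr : mrca f s t < r) (h1 : pre f r s) (h2 : pre f r t) : False :=
  absurd (le_mrca hf hs ht hst ((mrca_nonneg hf hs ht hst).trans hmr.le) h1 h2) (not_le.2 hmr)

lemma pre_left_of_right {r : ℝ} (h2 : pre f r t) (hrs : r ≤ s) : pre f r s :=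
  ⟨hrs, h2.2.trans (infIcc_anti' hf hrs hst)⟩

lemma xst_t_zero {r : ℝ} (hmr : mrca f s t < r) (h1 : pre f r s) : xst f r t = 0 :=
  xst_zero_of_not_pre fun h2 => mrca_disj hf hs ht hst hmr h1 h2

lemma xst_s_zero {r : ℝ} (hmr : mrca f s t < r) (h2 : pre f r t) : xst f r s = 0 := by
  by_cases hrs : r ≤ s
  · exact absurd (pre_left_of_right hf hs ht hst h2 hrs)
      (fun h1 => mrca_disj hf hs ht hst hmr h1 h2)
  · rw [xst, if_neg hrs]

lemma eqx_lt {r : ℝ} (h0 : 0 ≤ r) (hr : r < mrca f s t) : xst f r s = xst f r t := by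
  set m := mrca f s t with hm
  have hms : m ≤ s := mrca_le_left hf hs ht hst
  have h1 : infIcc f r s ≤ lm f m := by
    refine lm_ge hf ⟨h0.trans_lt hr, hms.trans hs.2⟩ hr fun v hv => ?_
    exact infIcc_le hf ⟨hv.1.le, hv.2.le.trans hms⟩
  have h2 : lm f m ≤ infIcc f m t := (pre_mrca_right hf hs ht hst).2
  have h3 : infIcc f m t ≤ infIcc f s t := infIcc_anti hf hms hst
  have hinf : infIcc f r t = infIcc f r s := by
    rw [infIcc_split hf (hr.le.trans hms) hst]
    exact min_eq_left ((h1.trans h2).trans h3)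
  unfold xst
  rw [if_pos (hr.le.trans hms), if_pos ((hr.le.trans hms).trans hst), hinf]

lemma pre_mrca_mid_s {r : ℝ} (hmr : mrca f s t < r) (h1 : pre f r s) :
    pre f (mrca f s t) r :=
  ⟨hmr.le, (pre_mrca_left hf hs ht hst).2.trans (infIcc_anti' hf hmr.le h1.1)⟩

lemma pre_mrca_mid_t {r : ℝ} (hmr : mrca f s t < r) (h2 : pre f r t) :
    pre f (mrca f s t) r :=
  ⟨hmr.le, (pre_mrca_right hf hs ht hst).2.trans (infIcc_anti' hf hmr.le h2.1)⟩

end Mrca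

lemma tele (hf : IsExcursion f) {b : ℝ} (hb : b ∈ Icc (0:ℝ) 1) :
    ∀ (n : ℕ) (u : Finset ℝ), u.card = n → (∀ r ∈ u, 0 < r ∧ pre f r b) →
      ∀ (hne : u.Nonempty), ∑ r ∈ u, (infIcc f r b - lm f r) ≤ f b - lm f (u.min' hne) := by
  intro n
  induction n with
  | zero =>
      intro u hcard hmem hne
      exact absurd (Finset.card_eq_zero.1 hcard) (Finset.nonempty_iff_ne_empty.1 hne)
  | succ n ih =>
      intro u hcard hmem hne
      set r0 := u.min' hne with hr0def
      have hr0u : r0 ∈ u := u.min'_mem hne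
      have hr0 := hmem r0 hr0u
      set u' := u.erase r0 with hu'
      have hsum : ∑ r ∈ u', (infIcc f r b - lm f r) + (infIcc f r0 b - lm f r0)
          = ∑ r ∈ u, (infIcc f r b - lm f r) := Finset.sum_erase_add u _ hr0u
      have hfb : infIcc f r0 b ≤ f b := infIcc_le hf ⟨hr0.2.1, le_refl b⟩
      rcases u'.eq_empty_or_nonempty with h | hne'
      · rw [← hsum, h, Finset.sum_empty]
        linarith
      · have hcard' : u'.card = n := by
          rw [hu', Finset.card_erase_of_mem hr0u, hcard]; rfl
        have hmem' : ∀ r ∈ u', 0 < r ∧ pre f r b := fun r hr => hmem r (Finset.mem_of_mem_erase hr)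
        have hih := ih u' hcard' hmem' hne'
        set r1 := u'.min' hne' with hr1def
        have hr1u' : r1 ∈ u' := u'.min'_mem hne'
        have hr1 := hmem' r1 hr1u'
        have hr01 : r0 < r1 :=
          lt_of_le_of_ne (u.min'_le r1 (Finset.mem_of_mem_erase hr1u'))
            (Ne.symm (Finset.ne_of_mem_erase hr1u'))
        have hbound : infIcc f r0 b ≤ lm f r1 := by
          refine lm_ge hf ⟨hr1.1, hr1.2.1.trans hb.2⟩ hr01 fun v hv => ?_
          exact infIcc_le hf ⟨hv.1.le, hv.2.le.trans hr1.2.1⟩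
        linarith

lemma summable_ite_xst (hf : IsExcursion f) {b : ℝ} (hb : b ∈ Icc (0:ℝ) 1)
    (Q : ℝ → Prop) (hQ : ∀ r, Q r → 0 < r ∧ pre f r b) :
    Summable (fun r => if Q r then xst f r b else 0) ∧
    (∀ u : Finset ℝ, ∑ r ∈ u, (if Q r then xst f r b else 0) ≤ f b) := by
  have hnn : 0 ≤ fun r => if Q r then xst f r b else 0 := by
    intro r
    by_cases h : Q r <;> simp [h, xst_nonneg]
  have hbd : ∀ u : Finset ℝ, ∑ r ∈ u, (if Q r then xst f r b else 0) ≤ f b := by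
    intro u
    classical
    rw [← Finset.sum_filter]
    have hcongr : ∑ r ∈ u.filter Q, xst f r b
        = ∑ r ∈ u.filter Q, (infIcc f r b - lm f r) := by
      refine Finset.sum_congr rfl fun r hr => ?_
      exact xst_of_pre (hQ r (Finset.mem_filter.1 hr).2).2
    rw [hcongr]
    rcases (u.filter Q).eq_empty_or_nonempty with h | hne
    · rw [h, Finset.sum_empty]
      exact f_nonneg hf b
    · have h1 := tele hf hb (u.filter Q).card (u.filter Q) rfl
        (fun r hr => hQ r (Finset.mem_filter.1 hr).2) hne
      have hmin := hQ _ (Finset.mem_filter.1 ((u.filter Q).min'_mem hne)).2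
      have h2 : 0 ≤ lm f ((u.filter Q).min' hne) :=
        lm_nonneg hf ⟨hmin.1.le, hmin.2.1.trans hb.2⟩
      linarith
  exact ⟨summable_of_sum_le hnn hbd, hbd⟩

end Statement3Aux

open Statement3Aux


set_option maxHeartbeats 1600000 in
theorem statement3 (f : ℝ → ℝ) (hf : IsExcursion f) (s t : ℝ)
    (hs : s ∈ Icc (0:ℝ) 1) (ht : t ∈ Icc (0:ℝ) 1) (hst : s ≤ t) :
    Summable (fun r : Icc (0:ℝ) 1 => cdel f r.1 (xst f r.1 s) (xst f r.1 t)) ∧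
    dL f s t = ∑' r : Icc (0:ℝ) 1, cdel f r.1 (xst f r.1 s) (xst f r.1 t) ∧
    Summable (fun r : Icc (0:ℝ) 1 => |xst f r.1 s - xst f r.1 t|) ∧
    dT f s t = f s + f t - 2 * infIcc f s t
      - ∑' r : Icc (0:ℝ) 1, |xst f r.1 s - xst f r.1 t| := by
  
  classical
  have hm0 : 0 ≤ mrca f s t := mrca_nonneg hf hs ht hst
  have hms' : mrca f s t ≤ s := mrca_le_left hf hs ht hst
  set m := mrca f s t with hmdef
  have hms : m ≤ s := hms'
  have hmt : m ≤ t := hms.trans hst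
  have hm1 : m ∈ Icc (0:ℝ) 1 := ⟨hm0, hmt.trans ht.2⟩
  have hps : pre f m s := pre_mrca_left hf hs ht hst
  have hpt : pre f m t := pre_mrca_right hf hs ht hst
  set Φ : ℝ → ℝ := fun r => cdel f r (xst f r s) (xst f r t) with hΦ
  set Ψ : ℝ → ℝ := fun r => |xst f r s - xst f r t| with hΨ
  set Qs : ℝ → Prop := fun r => m < r ∧ pre f r s with hQsdef
  set Qt : ℝ → Prop := fun r => m < r ∧ pre f r t with hQtdef
  have hQs_def : ∀ r, Qs r ↔ (m < r ∧ pre f r s) := fun r => Iff.rfl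
  have hQt_def : ∀ r, Qt r ↔ (m < r ∧ pre f r t) := fun r => Iff.rfl
  have hQsIcc : ∀ r, Qs r → r ∈ Icc (0:ℝ) 1 :=
    fun r h => ⟨hm0.trans h.1.le, h.2.1.trans hs.2⟩
  have hQtIcc : ∀ r, Qt r → r ∈ Icc (0:ℝ) 1 :=
    fun r h => ⟨hm0.trans h.1.le, h.2.1.trans ht.2⟩
  set Ks : ℝ → ℝ := fun r => if Qs r then xst f r s else 0 with hKs
  set Kt : ℝ → ℝ := fun r => if Qt r then xst f r t else 0 with hKt
  set Hs : ℝ → ℝ := fun r => if Qs r then Φ r else 0 with hHs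
  set Ht' : ℝ → ℝ := fun r => if Qt r then Φ r else 0 with hHt
  have SKs : Summable Ks := by
    rw [hKs]
    refine ((summable_ite_xst hf hs Qs fun r h => ⟨hm0.trans_lt h.1, h.2⟩).1).congr fun r => ?_
    by_cases h : Qs r <;> simp [h]
  have SKt : Summable Kt := by
    rw [hKt]
    refine ((summable_ite_xst hf ht Qt fun r h => ⟨hm0.trans_lt h.1, h.2⟩).1).congr fun r => ?_
    by_cases h : Qt r <;> simp [h]
  have hxt0 : ∀ r, Qs r → xst f r t = 0 := fun r h => xst_t_zero hf hs ht hst h.1 h.2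
  have hxs0 : ∀ r, Qt r → xst f r s = 0 := fun r h => xst_s_zero hf hs ht hst h.1 h.2
  have hnotboth : ∀ r, Qs r → ¬ Qt r :=
    fun r h1 h2 => mrca_disj hf hs ht hst h1.1 h1.2 h2.2
  have hΦQs_nonneg : ∀ r, Qs r → 0 ≤ Φ r := fun r h =>
    cdel_nonneg (xst_nonneg f r s) (xst_nonneg f r t)
      (xst_le_jump hf (hQsIcc r h) s) (xst_le_jump hf (hQsIcc r h) t)
  have hΦQt_nonneg : ∀ r, Qt r → 0 ≤ Φ r := fun r h =>
    cdel_nonneg (xst_nonneg f r s) (xst_nonneg f r t)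
      (xst_le_jump hf (hQtIcc r h) s) (xst_le_jump hf (hQtIcc r h) t)
  have hΦQs_le : ∀ r, Qs r → Φ r ≤ xst f r s := by
    intro r h
    calc Φ r ≤ |xst f r s - xst f r t| := cdel_le_abs
    _ = xst f r s := by rw [hxt0 r h, sub_zero, abs_of_nonneg (xst_nonneg f r s)]
  have hΦQt_le : ∀ r, Qt r → Φ r ≤ xst f r t := by
    intro r h
    calc Φ r ≤ |xst f r s - xst f r t| := cdel_le_abs
    _ = xst f r t := by rw [hxs0 r h, zero_sub, abs_neg, abs_of_nonneg (xst_nonneg f r t)]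
  have SHs : Summable Hs := by
    refine Summable.of_nonneg_of_le (fun r => ?_) (fun r => ?_) SKs
    · rw [hHs]; dsimp only; split
      · rename_i h; exact hΦQs_nonneg r h
      · exact le_refl 0
    · rw [hHs, hKs]; dsimp only; split
      · rename_i h; exact hΦQs_le r h
      · exact le_refl 0
  have SHt : Summable Ht' := by
    refine Summable.of_nonneg_of_le (fun r => ?_) (fun r => ?_) SKt
    · rw [hHt]; dsimp only; split
      · rename_i h; exact hΦQt_nonneg r h
      · exact le_refl 0
    · rw [hHt, hKt]; dsimp only; split
      · rename_i h; exact hΦQt_le r h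
      · exact le_refl 0
  -- pointwise decomposition on [0,1]
  have hpointΦ : ∀ r ∈ Icc (0:ℝ) 1,
      Φ r = (if r = m then Φ m else 0) + Hs r + Ht' r := by
    intro r hr
    by_cases hrm : r = m
    · subst hrm
      have h1 : ¬ Qs m := fun h => lt_irrefl m h.1
      have h2 : ¬ Qt m := fun h => lt_irrefl m h.1
      rw [if_pos rfl, hHs, hHt]; dsimp only
      rw [if_neg h1, if_neg h2]; ring
    · rw [if_neg hrm]
      rcases lt_or_gt_of_ne hrm with hlt | hgt
      · have hx := eqx_lt hf hs ht hst hr.1 hlt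
        have h1 : ¬ Qs r := fun h => absurd h.1 (not_lt.2 hlt.le)
        have h2 : ¬ Qt r := fun h => absurd h.1 (not_lt.2 hlt.le)
        rw [hHs, hHt]; dsimp only
        rw [if_neg h1, if_neg h2, hΦ]; dsimp only
        rw [hx, cdel_self (hf.jump_nonneg r hr)]; ring
      · by_cases hqs : pre f r s
        · have h1 : Qs r := ⟨hgt, hqs⟩
          have h2 : ¬ Qt r := hnotboth r h1
          rw [hHs, hHt]; dsimp only
          rw [if_pos h1, if_neg h2]; ring
        · by_cases hqt : pre f r t
          · have h2 : Qt r := ⟨hgt, hqt⟩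
            have h1 : ¬ Qs r := fun h => hqs h.2
            rw [hHs, hHt]; dsimp only
            rw [if_neg h1, if_pos h2]; ring
          · have hx1 : xst f r s = 0 := xst_zero_of_not_pre hqs
            have hx2 : xst f r t = 0 := xst_zero_of_not_pre hqt
            have h1 : ¬ Qs r := fun h => hqs h.2
            have h2 : ¬ Qt r := fun h => hqt h.2
            rw [hHs, hHt]; dsimp only
            rw [if_neg h1, if_neg h2, hΦ]; dsimp only
            rw [hx1, hx2, cdel_self (hf.jump_nonneg r hr)]; ring
  have hpointΨ : ∀ r ∈ Icc (0:ℝ) 1,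
      Ψ r = (if r = m then Ψ m else 0) + Ks r + Kt r := by
    intro r hr
    by_cases hrm : r = m
    · subst hrm
      have h1 : ¬ Qs m := fun h => lt_irrefl m h.1
      have h2 : ¬ Qt m := fun h => lt_irrefl m h.1
      rw [if_pos rfl, hKs, hKt]; dsimp only
      rw [if_neg h1, if_neg h2]; ring
    · rw [if_neg hrm]
      rcases lt_or_gt_of_ne hrm with hlt | hgt
      · have hx := eqx_lt hf hs ht hst hr.1 hlt
        have h1 : ¬ Qs r := fun h => absurd h.1 (not_lt.2 hlt.le)
        have h2 : ¬ Qt r := fun h => absurd h.1 (not_lt.2 hlt.le)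
        rw [hKs, hKt]; dsimp only
        rw [if_neg h1, if_neg h2, hΨ]; dsimp only
        rw [hx, sub_self, abs_zero]; ring
      · by_cases hqs : pre f r s
        · have h1 : Qs r := ⟨hgt, hqs⟩
          have h2 : ¬ Qt r := hnotboth r h1
          rw [hKs, hKt]; dsimp only
          rw [if_pos h1, if_neg h2, hΨ]; dsimp only
          rw [hxt0 r h1, sub_zero, abs_of_nonneg (xst_nonneg f r s)]; ring
        · by_cases hqt : pre f r t
          · have h2 : Qt r := ⟨hgt, hqt⟩
            have h1 : ¬ Qs r := fun h => hqs h.2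
            rw [hKs, hKt]; dsimp only
            rw [if_neg h1, if_pos h2, hΨ]; dsimp only
            rw [hxs0 r h2, zero_sub, abs_neg, abs_of_nonneg (xst_nonneg f r t)]; ring
          · have hx1 : xst f r s = 0 := xst_zero_of_not_pre hqs
            have hx2 : xst f r t = 0 := xst_zero_of_not_pre hqt
            have h1 : ¬ Qs r := fun h => hqs h.2
            have h2 : ¬ Qt r := fun h => hqt h.2
            rw [hKs, hKt]; dsimp only
            rw [if_neg h1, if_neg h2, hΨ]; dsimp only
            rw [hx1, hx2, sub_self, abs_zero]; ring
  -- indicator identities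
  have hindΦ : Set.indicator (Icc (0:ℝ) 1) Φ
      = fun r => (if r = m then Φ m else 0) + Hs r + Ht' r := by
    funext r
    by_cases hr : r ∈ Icc (0:ℝ) 1
    · rw [Set.indicator_of_mem hr]; exact hpointΦ r hr
    · rw [Set.indicator_of_notMem hr]
      have h1 : ¬ Qs r := fun h => hr (hQsIcc r h)
      have h2 : ¬ Qt r := fun h => hr (hQtIcc r h)
      have h3 : r ≠ m := fun h => hr (h ▸ hm1)
      rw [hHs, hHt]; dsimp only
      rw [if_neg h3, if_neg h1, if_neg h2]; ring
  have hindΨ : Set.indicator (Icc (0:ℝ) 1) Ψ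
      = fun r => (if r = m then Ψ m else 0) + Ks r + Kt r := by
    funext r
    by_cases hr : r ∈ Icc (0:ℝ) 1
    · rw [Set.indicator_of_mem hr]; exact hpointΨ r hr
    · rw [Set.indicator_of_notMem hr]
      have h1 : ¬ Qs r := fun h => hr (hQsIcc r h)
      have h2 : ¬ Qt r := fun h => hr (hQtIcc r h)
      have h3 : r ≠ m := fun h => hr (h ▸ hm1)
      rw [hKs, hKt]; dsimp only
      rw [if_neg h3, if_neg h1, if_neg h2]; ring
  have SMΦ : Summable (fun r : ℝ => if r = m then Φ m else 0) :=
    (hasSum_ite_eq m (Φ m)).summable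
  have SMΨ : Summable (fun r : ℝ => if r = m then Ψ m else 0) :=
    (hasSum_ite_eq m (Ψ m)).summable
  have SindΦ : Summable (Set.indicator (Icc (0:ℝ) 1) Φ) := by
    rw [hindΦ]; exact (SMΦ.add SHs).add SHt
  have SindΨ : Summable (Set.indicator (Icc (0:ℝ) 1) Ψ) := by
    rw [hindΨ]; exact (SMΨ.add SKs).add SKt
  have hsubΦ : Summable (fun r : Icc (0:ℝ) 1 => Φ r.1) :=
    summable_subtype_iff_indicator.2 SindΦ
  have hsubΨ : Summable (fun r : Icc (0:ℝ) 1 => Ψ r.1) :=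
    summable_subtype_iff_indicator.2 SindΨ
  have TΦ : ∑' r : Icc (0:ℝ) 1, Φ r.1
      = Φ m + (∑' r : ℝ, Hs r) + ∑' r : ℝ, Ht' r := by
    rw [tsum_subtype (Icc (0:ℝ) 1) Φ, hindΦ,
      Summable.tsum_add (SMΦ.add SHs) SHt, Summable.tsum_add SMΦ SHs, tsum_ite_eq]
  have TΨ : ∑' r : Icc (0:ℝ) 1, Ψ r.1
      = Ψ m + (∑' r : ℝ, Ks r) + ∑' r : ℝ, Kt r := by
    rw [tsum_subtype (Icc (0:ℝ) 1) Ψ, hindΨ,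
      Summable.tsum_add (SMΨ.add SKs) SKt, Summable.tsum_add SMΨ SKs, tsum_ite_eq]
  -- identify the dO and dTanc sums
  have hdOs : dO f m s = ∑' r : ℝ, Hs r := by
    unfold dO
    refine tsum_congr fun r => ?_
    by_cases h : Qs r
    · rw [if_pos ⟨pre_mrca_mid_s hf hs ht hst h.1 h.2, h.1, h.2⟩, hHs]; dsimp only
      rw [if_pos h, hΦ]; dsimp only
      rw [hxt0 r h, cdel_zero_comm]
    · rw [if_neg (fun hc => h ⟨hc.2.1, hc.2.2⟩), hHs]; dsimp only
      rw [if_neg h]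
  have hdOt : dO f m t = ∑' r : ℝ, Ht' r := by
    unfold dO
    refine tsum_congr fun r => ?_
    by_cases h : Qt r
    · rw [if_pos ⟨pre_mrca_mid_t hf hs ht hst h.1 h.2, h.1, h.2⟩, hHt]; dsimp only
      rw [if_pos h, hΦ]; dsimp only
      rw [hxs0 r h, cdel_zero_comm]
    · rw [if_neg (fun hc => h ⟨hc.2.1, hc.2.2⟩), hHt]; dsimp only
      rw [if_neg h]
  have hdL : dL f s t = Φ m + (∑' r : ℝ, Hs r) + ∑' r : ℝ, Ht' r := by
    rw [show dL f s t = cdel f m (xst f m s) (xst f m t) + dO f m s + dO f m t by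
      rw [dL, ← hmdef]]
    rw [hdOs, hdOt, hΦ]
  have hdTs : dTanc f m s = f s - infIcc f m s - ∑' r : ℝ, Ks r := by
    unfold dTanc
    have : (fun r : ℝ => if pre f m r ∧ m < r ∧ pre f r s then xst f r s else 0) = Ks := by
      funext r
      by_cases h : Qs r
      · rw [if_pos ⟨pre_mrca_mid_s hf hs ht hst h.1 h.2, h.1, h.2⟩, hKs]; dsimp only
        rw [if_pos h]
      · rw [if_neg (fun hc => h ⟨hc.2.1, hc.2.2⟩), hKs]; dsimp only
        rw [if_neg h]
    rw [this]
  have hdTt : dTanc f m t = f t - infIcc f m t - ∑' r : ℝ, Kt r := by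
    unfold dTanc
    have : (fun r : ℝ => if pre f m r ∧ m < r ∧ pre f r t then xst f r t else 0) = Kt := by
      funext r
      by_cases h : Qt r
      · rw [if_pos ⟨pre_mrca_mid_t hf hs ht hst h.1 h.2, h.1, h.2⟩, hKt]; dsimp only
        rw [if_pos h]
      · rw [if_neg (fun hc => h ⟨hc.2.1, hc.2.2⟩), hKt]; dsimp only
        rw [if_neg h]
    rw [this]
  have hdT : dT f s t = dTanc f m s + dTanc f m t := by rw [dT, ← hmdef]
  have hsplitB : infIcc f m t = infIcc f s t := by
    rw [infIcc_split hf hms hst]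
    exact min_eq_right (infC hf hs ht hst)
  have hCA : infIcc f s t ≤ infIcc f m s := infC hf hs ht hst
  have hΨm : Ψ m = infIcc f m s - infIcc f s t := by
    rw [hΨ]; dsimp only
    rw [xst_of_pre hps, xst_of_pre hpt, hsplitB,
      show infIcc f m s - lm f m - (infIcc f s t - lm f m)
        = infIcc f m s - infIcc f s t by ring]
    exact abs_of_nonneg (by linarith)
  refine ⟨hsubΦ, ?_, hsubΨ, ?_⟩
  · exact hdL.trans TΦ.symm
  · show dT f s t = f s + f t - 2 * infIcc f s t - ∑' r : Icc (0:ℝ) 1, Ψ r.1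
    rw [TΨ, hdT, hdTs, hdTt, hΨm]
    linarith [hsplitB]
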